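/- Let (q_j)_{j∈ℤ} be real numbers with q_m ≤ q_j ≤ q_M for all j, let the kernel weights satisfy γ₀ ≥ γ₁ ≥ … ≥ γ_{N−1} ≥ 0, let V₁ be continuously differentiable and V₂ be differentiable, and assume either (V₁' ≤ 0 and V₂' ≥ 0) or (V₁' ≥ 0 and V₂' ≤ 0) on the relevant ranges. Let L₁ be a bound for |V₁'| on the interval of attainable nonlocal values and L₂ a bound for |V₂'| on [q_m, q_M]. Then with V_j := V₁( Σ_{k=0}^{N−1} γ_k V₂(q_{j+k+1}) ), for every j ∈ ℤ one has V_{j−1} − V_j ≤ L₁ L₂ γ₀ ( q_M − q_j ). -/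

import Mathlib

open Finset

/-- Discrete nonlocal velocity `V_j = V₁( Σ_{k=0}^{N-1} γ_k V₂(q_{j+k+1}) )`. -/
noncomputable def discVel (γw : ℕ → ℝ) (N : ℕ) (V₁ V₂ : ℝ → ℝ) (u : ℤ → ℝ) (j : ℤ) : ℝ :=
  V₁ (∑ k ∈ Finset.range N, γw k * V₂ (u (j + (k : ℤ) + 1)))

/-- The interval of attainable nonlocal values
`[ (Σ_k γ_k) · inf_{[q_m,q_M]} V₂ , (Σ_k γ_k) · sup_{[q_m,q_M]} V₂ ]`. -/
noncomputable def attainSet (γw : ℕ → ℝ) (N : ℕ) (V₂ : ℝ → ℝ) (qm qM : ℝ) : Set ℝ :=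
  Set.Icc ((∑ k ∈ Finset.range N, γw k) * sInf (V₂ '' Set.Icc qm qM))
          ((∑ k ∈ Finset.range N, γw k) * sSup (V₂ '' Set.Icc qm qM))

/-- Abel-type summation bound for decreasing nonnegative weights. -/
lemma abel_bound (γ a : ℕ → ℝ) (B : ℝ) (hγ0 : ∀ k, 0 ≤ γ k) (hγm : ∀ k, γ (k+1) ≤ γ k)
    (ha : ∀ k, a k ≤ B) (N : ℕ) :
    ∑ k ∈ Finset.range N, γ k * (a (k+1) - a k)
      ≤ γ 0 * (B - a 0) - γ N * (B - a N) := by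
  induction N with
  | zero => simp
  | succ n ih =>
    rw [Finset.sum_range_succ]
    have h1 : γ (n+1) * (B - a (n+1)) ≤ γ n * (B - a (n+1)) :=
      mul_le_mul_of_nonneg_right (hγm n) (by linarith [ha (n+1)])
    have h2 : γ n * (B - a n) - γ n * (a (n+1) - a n) = γ n * (B - a (n+1)) := by ring
    linarith

/-- Key estimate, antitone case. -/
lemma key_anti (f : ℝ → ℝ) (lo hi L c S S' : ℝ) (hf : Differentiable ℝ f)
    (hanti : AntitoneOn f (Set.Icc lo hi))
    (hL : ∀ x ∈ Set.Icc lo hi, |deriv f x| ≤ L)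
    (hS : S ∈ Set.Icc lo hi) (hS' : S' ∈ Set.Icc lo hi)
    (hc : 0 ≤ c) (hss : S - S' ≤ c) :
    f S' - f S ≤ L * c := by
  obtain ⟨hS1, hS2⟩ := hS
  obtain ⟨hS'1, hS'2⟩ := hS'
  have hL0 : 0 ≤ L := (abs_nonneg _).trans (hL S ⟨hS1, hS2⟩)
  set t := max (S - c) lo with ht_def
  have ht : t ∈ Set.Icc lo hi := ⟨le_max_right _ _, max_le (by linarith) (hS1.trans hS2)⟩
  have hts' : t ≤ S' := max_le (by linarith) hS'1
  have htS : t ≤ S := max_le (by linarith) hS1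
  have h1 : f S' ≤ f t := hanti ht ⟨hS'1, hS'2⟩ hts'
  have h2 : ‖f t - f S‖ ≤ L * ‖t - S‖ :=
    Convex.norm_image_sub_le_of_norm_deriv_le (fun x _ => hf x) hL (convex_Icc lo hi) ⟨hS1, hS2⟩ ht
  rw [Real.norm_eq_abs, Real.norm_eq_abs] at h2
  have h3 : |t - S| = S - t := by rw [abs_sub_comm]; exact abs_of_nonneg (by linarith)
  have h4 : f t - f S ≤ |f t - f S| := le_abs_self _
  have h5 : L * (S - t) ≤ L * c :=
    mul_le_mul_of_nonneg_left (by simp only [ht_def]; linarith [le_max_left (S - c) lo]) hL0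
  rw [h3] at h2
  linarith

/-- Key estimate, monotone case. -/
lemma key_mono (f : ℝ → ℝ) (lo hi L c S S' : ℝ) (hf : Differentiable ℝ f)
    (hmono : MonotoneOn f (Set.Icc lo hi))
    (hL : ∀ x ∈ Set.Icc lo hi, |deriv f x| ≤ L)
    (hS : S ∈ Set.Icc lo hi) (hS' : S' ∈ Set.Icc lo hi)
    (hc : 0 ≤ c) (hss : S' - S ≤ c) :
    f S' - f S ≤ L * c := by
  obtain ⟨hS1, hS2⟩ := hS
  obtain ⟨hS'1, hS'2⟩ := hS'
  have hL0 : 0 ≤ L := (abs_nonneg _).trans (hL S ⟨hS1, hS2⟩)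
  set t := min (S + c) hi with ht_def
  have ht : t ∈ Set.Icc lo hi := ⟨le_min (by linarith) (hS1.trans hS2), min_le_right _ _⟩
  have hts' : S' ≤ t := le_min (by linarith) hS'2
  have htS : S ≤ t := le_min (by linarith) hS2
  have h1 : f S' ≤ f t := hmono ⟨hS'1, hS'2⟩ ht hts'
  have h2 : ‖f t - f S‖ ≤ L * ‖t - S‖ :=
    Convex.norm_image_sub_le_of_norm_deriv_le (fun x _ => hf x) hL (convex_Icc lo hi) ⟨hS1, hS2⟩ ht
  rw [Real.norm_eq_abs, Real.norm_eq_abs] at h2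
  have h3 : |t - S| = t - S := abs_of_nonneg (by linarith)
  have h4 : f t - f S ≤ |f t - f S| := le_abs_self _
  have h5 : L * (t - S) ≤ L * c :=
    mul_le_mul_of_nonneg_left (by simp only [ht_def]; linarith [min_le_left (S + c) hi]) hL0
  rw [h3] at h2
  linarith

/-- **Upper bound on the difference of consecutive discrete nonlocal velocities.**
`V_{j-1} - V_j ≤ L₁ L₂ γ₀ (q_M - q_j)` for all `j ∈ ℤ`. -/
theorem discrete_velocity_difference_upper
    (N : ℕ) (hN : 0 < N) (γw : ℕ → ℝ) (V₁ V₂ : ℝ → ℝ)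
    (qm qM L₁ L₂ : ℝ) (q : ℤ → ℝ)
    (hV₁ : ContDiff ℝ 1 V₁) (hV₂ : Differentiable ℝ V₂)
    (hγ_nonneg : ∀ k, k < N → 0 ≤ γw k)
    (hγ_mono : ∀ k, k + 1 < N → γw (k + 1) ≤ γw k)
    (hbd : ∀ j : ℤ, qm ≤ q j ∧ q j ≤ qM)
    (hsign :
      ((∀ x ∈ attainSet γw N V₂ qm qM, deriv V₁ x ≤ 0) ∧
        (∀ x ∈ Set.Icc qm qM, 0 ≤ deriv V₂ x)) ∨
      ((∀ x ∈ attainSet γw N V₂ qm qM, 0 ≤ deriv V₁ x) ∧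
        (∀ x ∈ Set.Icc qm qM, deriv V₂ x ≤ 0)))
    (hL₁ : ∀ a ∈ attainSet γw N V₂ qm qM, |deriv V₁ a| ≤ L₁)
    (hL₂ : ∀ a ∈ Set.Icc qm qM, |deriv V₂ a| ≤ L₂) :
    ∀ j : ℤ, discVel γw N V₁ V₂ q (j - 1) - discVel γw N V₁ V₂ q j
      ≤ L₁ * L₂ * γw 0 * (qM - q j) := by
  intro j
  have hqmM : qm ≤ qM := (hbd 0).1.trans (hbd 0).2
  set K := V₂ '' Set.Icc qm qM with hK
  have hKne : K.Nonempty := (Set.nonempty_Icc.mpr hqmM).image V₂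
  have hKcp : IsCompact K := isCompact_Icc.image hV₂.continuous
  have hgsum : 0 ≤ ∑ k ∈ Finset.range N, γw k :=
    Finset.sum_nonneg fun k hk => hγ_nonneg k (Finset.mem_range.mp hk)
  set m := sInf K with hm
  set M := sSup K with hMdef
  have hV₂bd : ∀ x ∈ Set.Icc qm qM, m ≤ V₂ x ∧ V₂ x ≤ M := by
    intro x hx
    exact ⟨csInf_le hKcp.bddBelow ⟨x, hx, rfl⟩, le_csSup hKcp.bddAbove ⟨x, hx, rfl⟩⟩
  set lo := (∑ k ∈ Finset.range N, γw k) * m with hlo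
  set hi := (∑ k ∈ Finset.range N, γw k) * M with hhi
  have hAS : attainSet γw N V₂ qm qM = Set.Icc lo hi := rfl
  set S : ℤ → ℝ := fun i => ∑ k ∈ Finset.range N, γw k * V₂ (q (i + (k : ℤ) + 1)) with hSdef
  have hSmem : ∀ i : ℤ, S i ∈ Set.Icc lo hi := by
    intro i
    constructor
    · rw [hlo, Finset.sum_mul]
      exact Finset.sum_le_sum fun k hk =>
        mul_le_mul_of_nonneg_left (hV₂bd _ ⟨(hbd _).1, (hbd _).2⟩).1
          (hγ_nonneg k (Finset.mem_range.mp hk))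
    · rw [hhi, Finset.sum_mul]
      exact Finset.sum_le_sum fun k hk =>
        mul_le_mul_of_nonneg_left (hV₂bd _ ⟨(hbd _).1, (hbd _).2⟩).2
          (hγ_nonneg k (Finset.mem_range.mp hk))
  have hL₁0 : 0 ≤ L₁ := (abs_nonneg _).trans (hL₁ (S j) (hSmem j))
  have hL₂0 : 0 ≤ L₂ := (abs_nonneg _).trans (hL₂ qm ⟨le_refl _, hqmM⟩)
  have hγ00 : 0 ≤ γw 0 := hγ_nonneg 0 hN
  -- Lipschitz bound for V₂ between q j and qM
  have hV2lip : |V₂ qM - V₂ (q j)| ≤ L₂ * (qM - q j) := by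
    have h := Convex.norm_image_sub_le_of_norm_deriv_le (f := V₂) (s := Set.Icc qm qM)
      (fun x _ => hV₂ x) (fun x hx => hL₂ x hx) (convex_Icc qm qM)
      ⟨(hbd j).1, (hbd j).2⟩ ⟨hqmM, le_refl _⟩
    rw [Real.norm_eq_abs, Real.norm_eq_abs] at h
    rwa [abs_of_nonneg (by linarith [(hbd j).2] : (0:ℝ) ≤ qM - q j)] at h
  -- extended weights
  set γ' : ℕ → ℝ := fun k => if k < N then γw k else 0 with hγ'def
  have hγ'0 : ∀ k, 0 ≤ γ' k := by
    intro k
    by_cases h : k < N <;> simp [hγ'def, h]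
    exact hγ_nonneg k h
  have hγ'm : ∀ k, γ' (k+1) ≤ γ' k := by
    intro k
    by_cases h1 : k + 1 < N
    · have h2 : k < N := by omega
      simp only [hγ'def, if_pos h1, if_pos h2]
      exact hγ_mono k h1
    · simp only [hγ'def, if_neg h1]
      exact hγ'0 k
  have hγ'eq : ∀ x : ℕ → ℝ, ∑ k ∈ Finset.range N, γ' k * x k
      = ∑ k ∈ Finset.range N, γw k * x k :=
    fun x => Finset.sum_congr rfl fun k hk => by
      simp [hγ'def, Finset.mem_range.mp hk]
  have hγ'0eq : γ' 0 = γw 0 := by simp [hγ'def, hN]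
  -- the sequence of successive V₂-values
  set a : ℕ → ℝ := fun k => V₂ (q (j + (k : ℤ))) with hadef
  have ha0 : a 0 = V₂ (q j) := by simp [hadef]
  have hSj1 : S (j - 1) = ∑ k ∈ Finset.range N, γ' k * a k := by
    rw [hγ'eq]
    refine Finset.sum_congr rfl fun k _ => ?_
    show γw k * V₂ (q (j - 1 + (k:ℤ) + 1)) = γw k * V₂ (q (j + (k:ℤ)))
    rw [show j - 1 + (k:ℤ) + 1 = j + k from by ring]
  have hSj : S j = ∑ k ∈ Finset.range N, γ' k * a (k + 1) := by
    rw [hγ'eq]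
    refine Finset.sum_congr rfl fun k _ => ?_
    show γw k * V₂ (q (j + (k:ℤ) + 1)) = γw k * V₂ (q (j + ((k+1:ℕ):ℤ)))
    rw [show j + ((k+1:ℕ):ℤ) = j + (k:ℤ) + 1 from by push_cast; ring]
  have hqmem : ∀ i : ℤ, q i ∈ Set.Icc qm qM := fun i => ⟨(hbd i).1, (hbd i).2⟩
  have hgoal1 : discVel γw N V₁ V₂ q (j - 1) = V₁ (S (j - 1)) := rfl
  have hgoal2 : discVel γw N V₁ V₂ q j = V₁ (S j) := rfl
  have hV₁diff : Differentiable ℝ V₁ := hV₁.differentiable one_ne_zero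
  rcases hsign with ⟨hs1, hs2⟩ | ⟨hs1, hs2⟩
  · -- V₁' ≤ 0, V₂' ≥ 0 : V₂ monotone
    have hmono : MonotoneOn V₂ (Set.Icc qm qM) :=
      monotoneOn_of_deriv_nonneg (convex_Icc qm qM) hV₂.continuous.continuousOn
        hV₂.differentiableOn (fun x hx => hs2 x (interior_subset hx))
    have haB : ∀ k, a k ≤ V₂ qM := fun k =>
      hmono (hqmem _) ⟨hqmM, le_refl _⟩ (hbd _).2
    have habel := abel_bound γ' a (V₂ qM) hγ'0 hγ'm haB N
    have hsplit : ∑ k ∈ Finset.range N, γ' k * (a (k+1) - a k)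
        = S j - S (j - 1) := by
      rw [hSj, hSj1, ← Finset.sum_sub_distrib]
      exact Finset.sum_congr rfl fun k _ => by ring
    have hγ'N : 0 ≤ γ' N * (V₂ qM - a N) :=
      mul_nonneg (hγ'0 N) (by linarith [haB N])
    set c := γw 0 * (V₂ qM - V₂ (q j)) with hc_def
    have hc0 : 0 ≤ c := mul_nonneg hγ00 (by linarith [haB 0, ha0.symm ▸ haB 0])
    have hss : S j - S (j - 1) ≤ c := by
      rw [← hsplit]
      rw [hc_def, ← ha0, ← hγ'0eq]
      linarith
    have hanti : AntitoneOn V₁ (Set.Icc lo hi) :=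
      antitoneOn_of_deriv_nonpos (convex_Icc lo hi) hV₁.continuous.continuousOn
        hV₁diff.differentiableOn (fun x hx => hs1 x (interior_subset hx))
    have hkey := key_anti V₁ lo hi L₁ c (S j) (S (j - 1)) hV₁diff hanti
      hL₁ (hSmem j) (hSmem (j - 1)) hc0 hss
    rw [hgoal1, hgoal2]
    have hfin : L₁ * c ≤ L₁ * L₂ * γw 0 * (qM - q j) := by
      have h1 : V₂ qM - V₂ (q j) ≤ L₂ * (qM - q j) :=
        (le_abs_self _).trans hV2lip
      have h2 : 0 ≤ L₁ * γw 0 := mul_nonneg hL₁0 hγ00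
      calc L₁ * c = L₁ * γw 0 * (V₂ qM - V₂ (q j)) := by rw [hc_def]; ring
        _ ≤ L₁ * γw 0 * (L₂ * (qM - q j)) := mul_le_mul_of_nonneg_left h1 h2
        _ = L₁ * L₂ * γw 0 * (qM - q j) := by ring
    linarith
  · -- V₁' ≥ 0, V₂' ≤ 0 : V₂ antitone
    have hmono : AntitoneOn V₂ (Set.Icc qm qM) :=
      antitoneOn_of_deriv_nonpos (convex_Icc qm qM) hV₂.continuous.continuousOn
        hV₂.differentiableOn (fun x hx => hs2 x (interior_subset hx))
    have haB : ∀ k, -(a k) ≤ -(V₂ qM) := fun k => by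
      have h := hmono (hqmem (j + (k:ℤ))) ⟨hqmM, le_refl _⟩ (hbd (j + (k:ℤ))).2
      exact neg_le_neg h
    have habel := abel_bound γ' (fun k => -(a k)) (-(V₂ qM)) hγ'0 hγ'm haB N
    have hsplit : ∑ k ∈ Finset.range N, γ' k * (-(a (k+1)) - -(a k))
        = S (j - 1) - S j := by
      rw [hSj, hSj1, ← Finset.sum_sub_distrib]
      exact Finset.sum_congr rfl fun k _ => by ring
    have hγ'N : 0 ≤ γ' N * (-(V₂ qM) - -(a N)) :=
      mul_nonneg (hγ'0 N) (by linarith [haB N])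
    set c := γw 0 * (V₂ (q j) - V₂ qM) with hc_def
    have hc0 : 0 ≤ c := mul_nonneg hγ00 (by linarith [haB 0, ha0.symm ▸ haB 0])
    have hss : S (j - 1) - S j ≤ c := by
      rw [← hsplit]
      rw [hc_def, ← ha0, ← hγ'0eq]
      linarith
    have hmono' : MonotoneOn V₁ (Set.Icc lo hi) :=
      monotoneOn_of_deriv_nonneg (convex_Icc lo hi) hV₁.continuous.continuousOn
        hV₁diff.differentiableOn (fun x hx => hs1 x (interior_subset hx))
    have hkey := key_mono V₁ lo hi L₁ c (S j) (S (j - 1)) hV₁diff hmono'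
      hL₁ (hSmem j) (hSmem (j - 1)) hc0 hss
    rw [hgoal1, hgoal2]
    have hfin : L₁ * c ≤ L₁ * L₂ * γw 0 * (qM - q j) := by
      have h1 : V₂ (q j) - V₂ qM ≤ L₂ * (qM - q j) := by
        have := (neg_le_abs _).trans hV2lip
        linarith
      have h2 : 0 ≤ L₁ * γw 0 := mul_nonneg hL₁0 hγ00
      calc L₁ * c = L₁ * γw 0 * (V₂ (q j) - V₂ qM) := by rw [hc_def]; ring
        _ ≤ L₁ * γw 0 * (L₂ * (qM - q j)) := mul_le_mul_of_nonneg_left h1 h2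
        _ = L₁ * L₂ * γw 0 * (qM - q j) := by ring
    linarith
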